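/- Let X and Y be real normed spaces with dim X ≥ dim Y = 2 and Y strictly convex, and let ρ > 0. If the finite-witness property holds for distances d and 2d (i.e., for pairs at these distances there exist finite sets on which injective ρ-distance-preserving maps to Y preserve the distance), then it holds for every distance k·d, k a positive integer. -/

import Mathlib

/-- The finite-witness property for the distance `r`: every pair of points of `X` at
distance `r` admits a finite set containing both such that every injective map from that
set to `Y` preserving the distance `ρ` preserves the distance between the pair. -/
def WitnessProp (X Y : Type*) [NormedAddCommGroup X] [NormedSpace ℝ X]
    [NormedAddCommGroup Y] [NormedSpace ℝ Y] (ρ r : ℝ) : Prop :=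
  ∀ x y : X, ‖x - y‖ = r → ∃ S : Finset X, x ∈ S ∧ y ∈ S ∧
    ∀ f : X → Y, Set.InjOn f ↑S →
      (∀ a ∈ S, ∀ b ∈ S, ‖a - b‖ = ρ → ‖f a - f b‖ = ρ) →
      ‖f x - f y‖ = ‖x - y‖

/-- If the finite-witness property holds for the distances `d` and `2·d`, then it holds
for every distance `k·d`, `k` a positive integer. -/
theorem witness_multiples {X Y : Type*} [NormedAddCommGroup X] [NormedSpace ℝ X]
    [NormedAddCommGroup Y] [NormedSpace ℝ Y]
    (hX : 2 ≤ Module.rank ℝ X) (hY : Module.finrank ℝ Y = 2)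
    (hsc : ∀ a b : Y, a ≠ 0 → b ≠ 0 → ‖a + b‖ = ‖a‖ + ‖b‖ → ∃ γ : ℝ, 0 < γ ∧ a = γ • b)
    (ρ : ℝ) (hρ : 0 < ρ) (d : ℝ) (hd : 0 < d)
    (h1 : WitnessProp X Y ρ d) (h2 : WitnessProp X Y ρ (2 * d)) :
    ∀ k : ℕ, 0 < k → WitnessProp X Y ρ (k * d) := by
  classical
  intro k hk x y hxy
  have hk0 : (k : ℝ) ≠ 0 := Nat.cast_ne_zero.mpr hk.ne'
  have hkR : (0 : ℝ) < k := Nat.cast_pos.mpr hk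
  set v := y - x with hv
  have hvnorm : ‖v‖ = k * d := by rw [hv, norm_sub_rev]; exact hxy
  set w : ℕ → X := fun i => x + ((i : ℝ) / k) • v with hw
  have hw0 : w 0 = x := by simp [hw]
  have hwk : w k = y := by
    simp only [hw, div_self hk0, one_smul, hv]
    abel
  have hdiff : ∀ i j : ℕ, w i - w (i + j) = (-(j : ℝ) / k) • v := by
    intro i j
    have h' : ((i : ℝ) / k) • v - (((i + j : ℕ) : ℝ) / k) • v = (-(j : ℝ) / k) • v := by
      rw [← sub_smul]; congr 1; push_cast; ring
    calc w i - w (i + j) = ((i : ℝ) / k) • v - (((i + j : ℕ) : ℝ) / k) • v := by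
          simp only [hw]; abel
      _ = (-(j : ℝ) / k) • v := h'
  have hnorm : ∀ i j : ℕ, ‖w i - w (i + j)‖ = j * d := by
    intro i j
    rw [hdiff i j, norm_smul, hvnorm, Real.norm_eq_abs, abs_div, abs_neg,
      abs_of_nonneg (Nat.cast_nonneg j), abs_of_pos hkR]
    field_simp
  have hpf1 : ∀ i : Fin k, ‖w i - w (i + 1)‖ = d := fun i => by
    simpa using hnorm i 1
  choose S1 hS1x hS1y hS1f using fun i : Fin k => h1 (w i) (w (i + 1)) (hpf1 i)
  have hpf2 : ∀ i : Fin (k - 1), ‖w i - w (i + 2)‖ = 2 * d := fun i => by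
    rw [hnorm i 2]; push_cast; ring
  choose S2 hS2x hS2y hS2f using fun i : Fin (k - 1) => h2 (w i) (w (i + 2)) (hpf2 i)
  set Sbig : Finset X := (Finset.univ.biUnion S1) ∪ (Finset.univ.biUnion S2) with hSbig
  have hsub1 : ∀ i : Fin k, S1 i ⊆ Sbig := fun i =>
    (Finset.subset_biUnion_of_mem S1 (Finset.mem_univ i)).trans Finset.subset_union_left
  have hsub2 : ∀ i : Fin (k - 1), S2 i ⊆ Sbig := fun i =>
    (Finset.subset_biUnion_of_mem S2 (Finset.mem_univ i)).trans Finset.subset_union_right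
  have i0 : Fin k := ⟨0, hk⟩
  have ilast : Fin k := ⟨k - 1, by omega⟩
  refine ⟨Sbig, ?_, ?_, ?_⟩
  · refine hsub1 ⟨0, hk⟩ ?_
    have := hS1x ⟨0, hk⟩
    simpa [hw0] using this
  · refine hsub1 ⟨k - 1, by omega⟩ ?_
    have := hS1y ⟨k - 1, by omega⟩
    have hkk : (k - 1) + 1 = k := by omega
    rw [show ((⟨k - 1, by omega⟩ : Fin k) : ℕ) = k - 1 from rfl, hkk, hwk] at this
    exact this
  · intro f hinj hpres
    set a : ℕ → Y := fun i => f (w i) - f (w (i + 1)) with ha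
    have key1 : ∀ i, i < k → ‖a i‖ = d := by
      intro i hi
      have h := hS1f ⟨i, hi⟩ f (hinj.mono (Finset.coe_subset.mpr (hsub1 ⟨i, hi⟩)))
        (fun p hp q hq hpq => hpres p (hsub1 ⟨i, hi⟩ hp) q (hsub1 ⟨i, hi⟩ hq) hpq)
      rw [hpf1 ⟨i, hi⟩] at h
      exact h
    have key2 : ∀ i, i + 2 ≤ k → ‖a i + a (i + 1)‖ = 2 * d := by
      intro i hi
      have hfin : i < k - 1 := by omega
      have h := hS2f ⟨i, hfin⟩ f (hinj.mono (Finset.coe_subset.mpr (hsub2 ⟨i, hfin⟩)))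
        (fun p hp q hq hpq => hpres p (hsub2 ⟨i, hfin⟩ hp) q (hsub2 ⟨i, hfin⟩ hq) hpq)
      rw [hpf2 ⟨i, hfin⟩] at h
      have hrw : a i + a (i + 1) = f (w i) - f (w (i + 2)) := by
        simp only [ha]
        abel_nf
        rfl
      rw [hrw]
      simpa using h
    have hEq : ∀ i, i + 2 ≤ k → a (i + 1) = a i := by
      intro i hi
      have h0 : ‖a i‖ = d := key1 i (by omega)
      have h1' : ‖a (i + 1)‖ = d := key1 (i + 1) (by omega)
      have hne0 : a i ≠ 0 := by
        intro h; rw [h, norm_zero] at h0; exact hd.ne h0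
      have hne1 : a (i + 1) ≠ 0 := by
        intro h; rw [h, norm_zero] at h1'; exact hd.ne h1'
      have hsum : ‖a i + a (i + 1)‖ = ‖a i‖ + ‖a (i + 1)‖ := by
        rw [key2 i hi, h0, h1']; ring
      obtain ⟨γ, hγ, hab⟩ := hsc _ _ hne0 hne1 hsum
      have hnn : ‖a i‖ = γ * ‖a (i + 1)‖ := by
        rw [hab, norm_smul, Real.norm_eq_abs, abs_of_pos hγ]
      rw [h0, h1'] at hnn
      have hγ1 : γ = 1 := mul_right_cancel₀ hd.ne' (by linarith : γ * d = 1 * d)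
      rw [hγ1, one_smul] at hab
      exact hab.symm
    have hConst : ∀ i, i < k → a i = a 0 := by
      intro i
      induction i with
      | zero => intro _; rfl
      | succ n ih =>
        intro hn
        rw [hEq n (by omega), ih (by omega)]
    have hxy' : f x - f y = ∑ i ∈ Finset.range k, a i := by
      rw [← hw0, ← hwk]
      exact (Finset.sum_range_sub' (fun i => f (w i)) k).symm
    have hsum' : ∑ i ∈ Finset.range k, a i = k • a 0 := by
      rw [Finset.sum_congr rfl (fun i hi => hConst i (Finset.mem_range.mp hi))]
      simp
    rw [hxy, hxy', hsum', ← Nat.cast_smul_eq_nsmul ℝ, norm_smul, Real.norm_eq_abs,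
      abs_of_pos hkR, key1 0 hk]
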